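/- Let A be a finitely generated commutative Hopf algebra over a field k of characteristic zero, with augmentation ideal 𝔞 (the kernel of the counit ε). Then the module of Kähler differentials Ω_{A/k} is isomorphic as an A-module to A ⊗_k (𝔞/𝔞²); in particular Ω_{A/k} is a free A-module of rank equal to dim_k(𝔞/𝔞²). -/

import Mathlib

open TensorProduct Coalgebra HopfAlgebra

namespace HopfKaehlerAux

variable {k A : Type*} [CommRing k] [CommRing A]

section Bialg
variable [Bialgebra k A]

/-- A representation of `comul (a*b)` built from representations of `comul a`, `comul b`. -/
noncomputable def reprMul {ι κ : Type*} {a b : A} (ra : Coalgebra.Repr k a ι)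
    (rb : Coalgebra.Repr k b κ) : Coalgebra.Repr k (a * b) (ι × κ) where
  index := ra.index ×ˢ rb.index
  left p := ra.left p.1 * rb.left p.2
  right p := ra.right p.1 * rb.right p.2
  eq := by
    rw [Finset.sum_product, Bialgebra.comul_mul, ← ra.eq, ← rb.eq, Finset.sum_mul_sum]
    simp [Algebra.TensorProduct.tmul_mul_tmul]

lemma sum_counit_smul_right {a : A} {ι : Type*} (r : Coalgebra.Repr k a ι) :
    ∑ i ∈ r.index, counit (R := k) (r.left i) • r.right i = a := by
  have h := congrArg (TensorProduct.lid k A) (sum_counit_tmul_eq r)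
  rw [map_sum] at h
  simp only [lid_tmul, one_smul] at h
  exact h

lemma sum_counit_smul_left {a : A} {ι : Type*} (r : Coalgebra.Repr k a ι) :
    ∑ i ∈ r.index, counit (R := k) (r.right i) • r.left i = a := by
  have h := congrArg (TensorProduct.rid k A) (sum_tmul_counit_eq r)
  rw [map_sum] at h
  simp only [rid_tmul, one_smul] at h
  exact h

lemma fold_smul₂ (c c' : k) (x y : A) :
    (algebraMap k A (c * c')) * (x * y) = (c • x) * (c' • y) := by
  rw [map_mul, Algebra.smul_def, Algebra.smul_def]; ring

end Bialg

section Hopf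
variable [HopfAlgebra k A]

lemma antipode_one' : antipode (R := k) (A := A) 1 = 1 := by
  have h := mul_antipode_rTensor_comul_apply (R := k) (a := (1 : A))
  rw [Bialgebra.comul_one, Algebra.TensorProduct.one_def] at h
  simp only [LinearMap.rTensor_tmul, LinearMap.mul'_apply, mul_one,
    Bialgebra.counit_one, map_one] at h
  exact h

/-- Auxiliary 6-linear evaluation map used in the proof of `antipode_mul`. -/
noncomputable def lam : (A ⊗[k] (A ⊗[k] A)) ⊗[k] (A ⊗[k] (A ⊗[k] A)) →ₗ[k] A :=
  (LinearMap.mul' k A) ∘ₗ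
    (TensorProduct.map ((antipode k : A →ₗ[k] A) ∘ₗ LinearMap.mul' k A)
      ((LinearMap.mul' k A) ∘ₗ
        (TensorProduct.map (LinearMap.mul' k A)
          ((LinearMap.mul' k A) ∘ₗ
            TensorProduct.map (antipode k : A →ₗ[k] A) (antipode k : A →ₗ[k] A))) ∘ₗ
        (tensorTensorTensorComm k A A A A).toLinearMap)) ∘ₗ
    (tensorTensorTensorComm k A (A ⊗[k] A) A (A ⊗[k] A)).toLinearMap

lemma lam_tmul (x₁ x₂ x₃ y₁ y₂ y₃ : A) :
    lam (((x₁ ⊗ₜ[k] (x₂ ⊗ₜ[k] x₃)) ⊗ₜ[k] (y₁ ⊗ₜ[k] (y₂ ⊗ₜ[k] y₃))) :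
        (A ⊗[k] (A ⊗[k] A)) ⊗[k] (A ⊗[k] (A ⊗[k] A))) =
      antipode (R := k) (x₁ * y₁) *
        ((x₂ * y₂) * (antipode (R := k) x₃ * antipode (R := k) y₃)) := by
  simp [lam, tensorTensorTensorComm_tmul, LinearMap.mul'_apply]

theorem antipode_mul' (a b : A) :
    antipode (R := k) (a * b) = antipode (R := k) a * antipode (R := k) b := by
  classical
  obtain ra := ℛ k a
  obtain rb := ℛ k b
  have ra1 : ∀ i : ra.ι, Coalgebra.Repr k (ra.left i) (A × A) := fun i => ℛ k (ra.left i)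
  have ra2 : ∀ i : ra.ι, Coalgebra.Repr k (ra.right i) (A × A) := fun i => ℛ k (ra.right i)
  have rb1 : ∀ i : rb.ι, Coalgebra.Repr k (rb.left i) (A × A) := fun i => ℛ k (rb.left i)
  have rb2 : ∀ i : rb.ι, Coalgebra.Repr k (rb.right i) (A × A) := fun i => ℛ k (rb.right i)
  have key := congrArg lam (congrArg₂ (· ⊗ₜ[k] ·)
    (sum_tmul_tmul_eq ra ra1 ra2) (sum_tmul_tmul_eq rb rb1 rb2))
  simp only [TensorProduct.sum_tmul, TensorProduct.tmul_sum, map_sum, lam_tmul] at key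
  -- `key :  Σp Σq Σi Σj  (left-assoc'd version)  =  Σp Σq Σi Σj (right-assoc'd version)`
  have hR : (∑ p ∈ rb.index, ∑ q ∈ (rb2 p).index, ∑ i ∈ ra.index, ∑ j ∈ (ra2 i).index,
      antipode (R := k) (ra.left i * rb.left p) *
        (((ra2 i).left j * (rb2 p).left q) *
          (antipode (R := k) ((ra2 i).right j) * antipode (R := k) ((rb2 p).right q))))
      = antipode (R := k) (a * b) := by
    have step1 : ∀ p ∈ rb.index, ∀ q ∈ (rb2 p).index, ∀ i ∈ ra.index,
        (∑ j ∈ (ra2 i).index,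
          antipode (R := k) (ra.left i * rb.left p) *
            (((ra2 i).left j * (rb2 p).left q) *
              (antipode (R := k) ((ra2 i).right j) * antipode (R := k) ((rb2 p).right q))))
        = antipode (R := k)
            ((counit (R := k) (ra.right i) • ra.left i) * rb.left p) *
              ((rb2 p).left q * antipode (R := k) ((rb2 p).right q)) := by
      intro p _ q _ i _
      have : ∀ j ∈ (ra2 i).index,
          antipode (R := k) (ra.left i * rb.left p) *
            (((ra2 i).left j * (rb2 p).left q) *
              (antipode (R := k) ((ra2 i).right j) * antipode (R := k) ((rb2 p).right q)))
          = (antipode (R := k) (ra.left i * rb.left p) *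
              ((rb2 p).left q * antipode (R := k) ((rb2 p).right q))) *
              ((ra2 i).left j * antipode (R := k) ((ra2 i).right j)) := fun j _ => by ring
      rw [Finset.sum_congr rfl this, ← Finset.mul_sum, sum_mul_antipode_eq_algebraMap_counit (ra2 i)]
      rw [smul_mul_assoc, map_smul, smul_mul_assoc, Algebra.smul_def]
      ring
    calc
      _ = ∑ p ∈ rb.index, ∑ q ∈ (rb2 p).index, ∑ i ∈ ra.index,
            antipode (R := k) ((counit (R := k) (ra.right i) • ra.left i) * rb.left p) *
              ((rb2 p).left q * antipode (R := k) ((rb2 p).right q)) := by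
        refine Finset.sum_congr rfl fun p hp => Finset.sum_congr rfl fun q hq =>
          Finset.sum_congr rfl fun i hi => step1 p hp q hq i hi
      _ = ∑ p ∈ rb.index, ∑ q ∈ (rb2 p).index,
            antipode (R := k) (a * rb.left p) *
              ((rb2 p).left q * antipode (R := k) ((rb2 p).right q)) := by
        refine Finset.sum_congr rfl fun p _ => Finset.sum_congr rfl fun q _ => ?_
        rw [← Finset.sum_mul, ← map_sum, ← Finset.sum_mul, sum_counit_smul_left ra]
      _ = ∑ p ∈ rb.index,
            antipode (R := k) (a * rb.left p) *
              algebraMap k A (counit (R := k) (rb.right p)) := by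
        refine Finset.sum_congr rfl fun p _ => ?_
        rw [← Finset.mul_sum, sum_mul_antipode_eq_algebraMap_counit (rb2 p)]
      _ = antipode (R := k) (a * b) := by
        have : ∀ p ∈ rb.index,
            antipode (R := k) (a * rb.left p) *
              algebraMap k A (counit (R := k) (rb.right p))
            = antipode (R := k) (a * (counit (R := k) (rb.right p) • rb.left p)) := by
          intro p _
          rw [mul_smul_comm, map_smul, Algebra.smul_def]
          ring
        rw [Finset.sum_congr rfl this, ← map_sum, ← Finset.mul_sum, sum_counit_smul_left rb]
  have hL : (∑ p ∈ rb.index, ∑ q ∈ (rb1 p).index, ∑ i ∈ ra.index, ∑ j ∈ (ra1 i).index,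
      antipode (R := k) ((ra1 i).left j * (rb1 p).left q) *
        (((ra1 i).right j * (rb1 p).right q) *
          (antipode (R := k) (ra.right i) * antipode (R := k) (rb.right p))))
      = antipode (R := k) a * antipode (R := k) b := by
    calc
      _ = ∑ p ∈ rb.index, ∑ i ∈ ra.index, ∑ q ∈ (rb1 p).index, ∑ j ∈ (ra1 i).index,
            antipode (R := k) ((ra1 i).left j * (rb1 p).left q) *
              (((ra1 i).right j * (rb1 p).right q) *
                (antipode (R := k) (ra.right i) * antipode (R := k) (rb.right p))) := by
        exact Finset.sum_congr rfl fun p _ => Finset.sum_comm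

      _ = ∑ p ∈ rb.index, ∑ i ∈ ra.index,
            (counit (R := k) (ra.left i) • antipode (R := k) (ra.right i)) *
              (counit (R := k) (rb.left p) • antipode (R := k) (rb.right p)) := by
        refine Finset.sum_congr rfl fun p _ => Finset.sum_congr rfl fun i _ => ?_
        have comm : (∑ q ∈ (rb1 p).index, ∑ j ∈ (ra1 i).index,
            antipode (R := k) ((ra1 i).left j * (rb1 p).left q) *
              (((ra1 i).right j * (rb1 p).right q) *
                (antipode (R := k) (ra.right i) * antipode (R := k) (rb.right p))))
            = ∑ j ∈ (ra1 i).index, ∑ q ∈ (rb1 p).index,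
            (antipode (R := k) ((ra1 i).left j * (rb1 p).left q) *
              ((ra1 i).right j * (rb1 p).right q)) *
                (antipode (R := k) (ra.right i) * antipode (R := k) (rb.right p)) := by
          rw [Finset.sum_comm]
          exact Finset.sum_congr rfl fun j _ => Finset.sum_congr rfl fun q _ => by ring
        have hprod := sum_antipode_mul_eq_algebraMap_counit (R := k) (reprMul (ra1 i) (rb1 p))
        simp only [reprMul] at hprod
        rw [Finset.sum_product] at hprod
        have factor : (∑ j ∈ (ra1 i).index, ∑ q ∈ (rb1 p).index,
            (antipode (R := k) ((ra1 i).left j * (rb1 p).left q) *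
              ((ra1 i).right j * (rb1 p).right q)) *
                (antipode (R := k) (ra.right i) * antipode (R := k) (rb.right p)))
            = (∑ j ∈ (ra1 i).index, ∑ q ∈ (rb1 p).index,
                antipode (R := k) ((ra1 i).left j * (rb1 p).left q) *
                  ((ra1 i).right j * (rb1 p).right q)) *
                (antipode (R := k) (ra.right i) * antipode (R := k) (rb.right p)) := by
          rw [Finset.sum_mul]
          exact Finset.sum_congr rfl fun j _ => by rw [Finset.sum_mul]
        rw [comm, factor, hprod, Bialgebra.counit_mul, fold_smul₂]
      _ = antipode (R := k) a * antipode (R := k) b := by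
        have inner : ∀ p ∈ rb.index,
            (∑ i ∈ ra.index,
              (counit (R := k) (ra.left i) • antipode (R := k) (ra.right i)) *
                (counit (R := k) (rb.left p) • antipode (R := k) (rb.right p)))
            = antipode (R := k) a *
                (counit (R := k) (rb.left p) • antipode (R := k) (rb.right p)) := by
          intro p _
          rw [← Finset.sum_mul]
          congr 1
          simp_rw [← map_smul]
          rw [← map_sum, sum_counit_smul_right ra]
        rw [Finset.sum_congr rfl inner, ← Finset.mul_sum]
        congr 1
        simp_rw [← map_smul]
        rw [← map_sum, sum_counit_smul_right rb]
  rw [← hR, ← hL]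
  exact key.symm

end Hopf



section Defs
variable (k A : Type*) [CommRing k] [CommRing A] [HopfAlgebra k A]

noncomputable abbrev augI : Ideal A := RingHom.ker (Bialgebra.counitAlgHom k A)

noncomputable abbrev augS : Submodule k A := Submodule.restrictScalars k (augI k A)

noncomputable abbrev augN : Submodule k (augS k A) :=
  Submodule.comap (augS k A).subtype (Submodule.restrictScalars k (augI k A * augI k A))

noncomputable abbrev QQ := augS k A ⧸ augN k A

lemma mem_augI {x : A} : x ∈ augI k A ↔ counit (R := k) x = 0 := Iff.rfl

noncomputable def pr : A →ₗ[k] augS k A :=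
  LinearMap.codRestrict (augS k A)
    (LinearMap.id - (Algebra.linearMap k A) ∘ₗ (Bialgebra.counitAlgHom k A).toLinearMap)
    (fun a => by
      show _ ∈ augI k A
      rw [mem_augI]
      simp only [LinearMap.sub_apply, LinearMap.id_apply, LinearMap.coe_comp,
        Function.comp_apply, AlgHom.toLinearMap_apply, Algebra.linearMap_apply, map_sub]
      rw [Bialgebra.counit_algebraMap]
      show counit (R := k) a - (Bialgebra.counitAlgHom k A) a = 0
      rw [sub_eq_zero]
      rfl)

lemma pr_coe (a : A) :
    ((pr k A a : augS k A) : A) = a - algebraMap k A (counit (R := k) a) := rfl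

noncomputable def pp : A →ₗ[k] QQ k A := (augN k A).mkQ ∘ₗ pr k A

lemma pp_apply (a : A) : pp k A a = Submodule.Quotient.mk (pr k A a) := rfl

lemma pp_of_mem {x : A} (hx : x ∈ augS k A) :
    pp k A x = Submodule.Quotient.mk ⟨x, hx⟩ := by
  have h : pr k A x = ⟨x, hx⟩ := Subtype.ext (by
    rw [pr_coe, show counit (R := k) x = 0 from (mem_augI k A).mp hx, map_zero, sub_zero])
  rw [pp_apply, h]

lemma pp_one : pp k A 1 = 0 := by
  have h : pr k A 1 = 0 := Subtype.ext (by rw [pr_coe]; simp)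
  rw [pp_apply, h, Submodule.Quotient.mk_zero]

lemma pp_mul (x y : A) :
    pp k A (x * y) = counit (R := k) x • pp k A y + counit (R := k) y • pp k A x := by
  have key : pr k A (x * y) -
      (counit (R := k) x • pr k A y + counit (R := k) y • pr k A x) ∈ augN k A := by
    have hval : ((pr k A (x * y) -
        (counit (R := k) x • pr k A y + counit (R := k) y • pr k A x) : augS k A) : A)
        = (x - algebraMap k A (counit (R := k) x)) * (y - algebraMap k A (counit (R := k) y)) := by
      simp only [AddSubgroupClass.coe_sub, Submodule.coe_add, SetLike.val_smul, pr_coe,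
        Bialgebra.counit_mul, map_mul, Algebra.smul_def]
      ring
    show ((pr k A (x * y) -
        (counit (R := k) x • pr k A y + counit (R := k) y • pr k A x) : augS k A) : A)
        ∈ Submodule.restrictScalars k (augI k A * augI k A)
    rw [hval]
    exact Ideal.mul_mem_mul (pr k A x).2 (pr k A y).2
  have : pp k A (x * y) = Submodule.Quotient.mk
      (counit (R := k) x • pr k A y + counit (R := k) y • pr k A x) := by
    rw [pp_apply]
    exact (Submodule.Quotient.eq _).mpr key
  rw [this, Submodule.Quotient.mk_add, Submodule.Quotient.mk_smul, Submodule.Quotient.mk_smul]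
  rfl

end Defs



section Deriv
variable (k A : Type*) [CommRing k] [CommRing A] [HopfAlgebra k A]

noncomputable def dD : A →ₗ[k] A ⊗[k] QQ k A :=
  (LinearMap.lTensor A (pp k A)) ∘ₗ (Coalgebra.comul : A →ₗ[k] A ⊗[k] A)

lemma dD_repr {a : A} {ι : Type*} (r : Coalgebra.Repr k a ι) :
    dD k A a = ∑ i ∈ r.index, r.left i ⊗ₜ[k] pp k A (r.right i) := by
  rw [dD, LinearMap.comp_apply, ← r.eq, map_sum]
  exact Finset.sum_congr rfl fun i _ => by rw [LinearMap.lTensor_tmul]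

lemma dD_one : dD k A 1 = 0 := by
  rw [dD, LinearMap.comp_apply, Bialgebra.comul_one, Algebra.TensorProduct.one_def,
    LinearMap.lTensor_tmul, pp_one, tmul_zero]

noncomputable def Dder : Derivation k A (A ⊗[k] QQ k A) where
  toLinearMap := dD k A
  map_one_eq_zero' := dD_one k A
  leibniz' a b := by
    classical
    obtain ra := ℛ k a
    obtain rb := ℛ k b
    show dD k A (a * b) = a • dD k A b + b • dD k A a
    rw [dD_repr k A (reprMul ra rb), dD_repr k A ra, dD_repr k A rb,
      Finset.smul_sum, Finset.smul_sum]
    simp only [reprMul]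
    rw [Finset.sum_product]
    have per : ∀ i ∈ ra.index, ∀ p ∈ rb.index,
        (ra.left i * rb.left p) ⊗ₜ[k] pp k A (ra.right i * rb.right p)
        = (counit (R := k) (ra.right i) • (ra.left i * rb.left p)) ⊗ₜ[k] pp k A (rb.right p)
          + (counit (R := k) (rb.right p) • (ra.left i * rb.left p)) ⊗ₜ[k] pp k A (ra.right i) := by
      intro i _ p _
      rw [pp_mul, tmul_add, tmul_smul, tmul_smul, smul_tmul', smul_tmul']
    rw [Finset.sum_congr rfl (fun i hi => Finset.sum_congr rfl fun p hp => per i hi p hp)]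
    simp only [Finset.sum_add_distrib]
    congr 1
    · -- first term equals a • dD b
      rw [Finset.sum_comm]
      refine Finset.sum_congr rfl fun p _ => ?_
      have : ∀ i ∈ ra.index,
          (counit (R := k) (ra.right i) • (ra.left i * rb.left p)) ⊗ₜ[k] pp k A (rb.right p)
          = ((counit (R := k) (ra.right i) • ra.left i) * rb.left p) ⊗ₜ[k] pp k A (rb.right p) := by
        intro i _
        rw [smul_mul_assoc]
      rw [Finset.sum_congr rfl this, ← sum_tmul, ← Finset.sum_mul, sum_counit_smul_left ra,
        smul_tmul']
      rfl
    · -- second term equals b • dD a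
      refine Finset.sum_congr rfl fun i _ => ?_
      have : ∀ p ∈ rb.index,
          (counit (R := k) (rb.right p) • (ra.left i * rb.left p)) ⊗ₜ[k] pp k A (ra.right i)
          = ((counit (R := k) (rb.right p) • rb.left p) * ra.left i) ⊗ₜ[k] pp k A (ra.right i) := by
        intro p _
        rw [smul_mul_assoc, mul_comm (rb.left p) (ra.left i)]
      rw [Finset.sum_congr rfl this, ← sum_tmul, ← Finset.sum_mul, sum_counit_smul_left rb,
        smul_tmul', smul_eq_mul]

noncomputable def hmap : A →ₗ[k] Ω[A⁄k] :=
  (LinearMap.restrictScalars k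
      ((KaehlerDifferential.D k A).toLinearMap.liftBaseChange A)) ∘ₗ
    (LinearMap.rTensor A (antipode k : A →ₗ[k] A)) ∘ₗ (Coalgebra.comul : A →ₗ[k] A ⊗[k] A)

lemma hmap_repr {a : A} {ι : Type*} (r : Coalgebra.Repr k a ι) :
    hmap k A a = ∑ i ∈ r.index,
      antipode (R := k) (r.left i) • KaehlerDifferential.D k A (r.right i) := by
  rw [hmap, LinearMap.comp_apply, LinearMap.comp_apply, ← r.eq, map_sum, LinearMap.restrictScalars_apply, map_sum]
  exact Finset.sum_congr rfl fun i _ => by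
    rw [LinearMap.rTensor_tmul, LinearMap.liftBaseChange_tmul]
    rfl

lemma hmap_one : hmap k A 1 = 0 := by
  rw [hmap, LinearMap.comp_apply, LinearMap.comp_apply, Bialgebra.comul_one,
    Algebra.TensorProduct.one_def, LinearMap.rTensor_tmul, LinearMap.restrictScalars_apply,
    LinearMap.liftBaseChange_tmul]
  show antipode (R := k) 1 • (KaehlerDifferential.D k A) 1 = 0
  rw [Derivation.map_one_eq_zero, smul_zero]

lemma hmap_ker : ∀ x ∈ augI k A * augI k A, hmap k A x = 0 := by
  intro x hx
  refine Submodule.mul_induction_on hx (fun u hu v hv => ?_)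
    (fun p q hp hq => by rw [map_add, hp, hq, add_zero])
  classical
  obtain ru := ℛ k u
  obtain rv := ℛ k v
  have hu0 : counit (R := k) u = 0 := (mem_augI k A).mp hu
  have hv0 : counit (R := k) v = 0 := (mem_augI k A).mp hv
  rw [hmap_repr k A (reprMul ru rv)]
  simp only [reprMul]
  rw [Finset.sum_product]
  have per : ∀ i ∈ ru.index, ∀ p ∈ rv.index,
      antipode (R := k) (ru.left i * rv.left p) •
        KaehlerDifferential.D k A (ru.right i * rv.right p)
      = ((antipode (R := k) (ru.left i) * ru.right i) * antipode (R := k) (rv.left p)) •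
          KaehlerDifferential.D k A (rv.right p)
        + ((antipode (R := k) (rv.left p) * rv.right p) * antipode (R := k) (ru.left i)) •
          KaehlerDifferential.D k A (ru.right i) := by
    intro i _ p _
    rw [antipode_mul', Derivation.leibniz, smul_add, smul_smul, smul_smul,
      show antipode (R := k) (ru.left i) * antipode (R := k) (rv.left p) * ru.right i
        = (antipode (R := k) (ru.left i) * ru.right i) * antipode (R := k) (rv.left p) from by
          ring,
      show antipode (R := k) (ru.left i) * antipode (R := k) (rv.left p) * rv.right p
        = (antipode (R := k) (rv.left p) * rv.right p) * antipode (R := k) (ru.left i) from by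
          ring]
  rw [Finset.sum_congr rfl (fun i hi => Finset.sum_congr rfl fun p hp => per i hi p hp)]
  simp only [Finset.sum_add_distrib]
  have h1 : (∑ i ∈ ru.index, ∑ p ∈ rv.index,
      ((antipode (R := k) (ru.left i) * ru.right i) * antipode (R := k) (rv.left p)) •
        KaehlerDifferential.D k A (rv.right p)) = 0 := by
    rw [Finset.sum_comm]
    refine Finset.sum_eq_zero fun p _ => ?_
    rw [← Finset.sum_smul, ← Finset.sum_mul, sum_antipode_mul_eq_algebraMap_counit ru, hu0, map_zero, zero_mul,
      zero_smul]
  have h2 : (∑ i ∈ ru.index, ∑ p ∈ rv.index,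
      ((antipode (R := k) (rv.left p) * rv.right p) * antipode (R := k) (ru.left i)) •
        KaehlerDifferential.D k A (ru.right i)) = 0 := by
    refine Finset.sum_eq_zero fun i _ => ?_
    rw [← Finset.sum_smul, ← Finset.sum_mul, sum_antipode_mul_eq_algebraMap_counit rv, hv0, map_zero, zero_mul,
      zero_smul]
  rw [h1, h2, add_zero]

end Deriv


end HopfKaehlerAux
namespace HopfKaehlerAux

section Equiv
variable (k A : Type*) [CommRing k] [CommRing A] [HopfAlgebra k A]

noncomputable def gmap : QQ k A →ₗ[k] Ω[A⁄k] :=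
  Submodule.liftQ (augN k A) ((hmap k A) ∘ₗ (augS k A).subtype)
    (fun x hx => by
      rw [LinearMap.mem_ker, LinearMap.comp_apply]
      exact hmap_ker k A _ hx)

lemma gmap_mk {x : A} (hx : x ∈ augS k A) :
    gmap k A (Submodule.Quotient.mk ⟨x, hx⟩) = hmap k A x :=
  Submodule.liftQ_apply _ _ _

lemma gmap_pp (y : A) : gmap k A (pp k A y) = hmap k A y := by
  rw [pp_apply, gmap, Submodule.liftQ_apply, LinearMap.comp_apply, Submodule.coe_subtype,
    pr_coe, map_sub]
  have h : hmap k A (algebraMap k A (counit (R := k) y)) = 0 := by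
    rw [Algebra.algebraMap_eq_smul_one, map_smul, hmap_one, smul_zero]
  rw [h, sub_zero]

noncomputable def Fmap : Ω[A⁄k] →ₗ[A] A ⊗[k] QQ k A :=
  (Dder k A).liftKaehlerDifferential

noncomputable def Gmap : A ⊗[k] QQ k A →ₗ[A] Ω[A⁄k] :=
  (gmap k A).liftBaseChange A

/-- contraction `u ⊗ (v ⊗ w) ↦ (u * S v) • d w` -/
noncomputable def Tmap : A ⊗[k] (A ⊗[k] A) →ₗ[k] Ω[A⁄k] :=
  (LinearMap.restrictScalars k
      ((KaehlerDifferential.D k A).toLinearMap.liftBaseChange A)) ∘ₗ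
    (TensorProduct.map ((LinearMap.mul' k A) ∘ₗ (LinearMap.lTensor A (antipode k : A →ₗ[k] A)))
      LinearMap.id) ∘ₗ
    (TensorProduct.assoc k A A A).symm.toLinearMap

lemma Tmap_tmul (u v w : A) :
    Tmap k A (u ⊗ₜ[k] (v ⊗ₜ[k] w)) =
      (u * antipode (R := k) v) • KaehlerDifferential.D k A w := by
  simp [Tmap, LinearMap.mul'_apply]

/-- contraction `u ⊗ (v ⊗ w) ↦ (S u * v) ⊗ pp w` -/
noncomputable def T2map : A ⊗[k] (A ⊗[k] A) →ₗ[k] A ⊗[k] QQ k A :=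
  (TensorProduct.map ((LinearMap.mul' k A) ∘ₗ (LinearMap.rTensor A (antipode k : A →ₗ[k] A)))
      (pp k A)) ∘ₗ
    (TensorProduct.assoc k A A A).symm.toLinearMap

lemma T2map_tmul (u v w : A) :
    T2map k A (u ⊗ₜ[k] (v ⊗ₜ[k] w)) =
      (antipode (R := k) u * v) ⊗ₜ[k] pp k A w := by
  simp [T2map, LinearMap.mul'_apply]

lemma Gmap_tmul (x : A) (q : QQ k A) : Gmap k A (x ⊗ₜ[k] q) = x • gmap k A q := rfl

lemma Gmap_Fmap : (Gmap k A) ∘ₗ (Fmap k A) = LinearMap.id := by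
  classical
  refine Derivation.liftKaehlerDifferential_unique _ _ (Derivation.ext fun b => ?_)
  show Gmap k A (Fmap k A (KaehlerDifferential.D k A b)) = KaehlerDifferential.D k A b
  rw [Fmap, Derivation.liftKaehlerDifferential_comp_D]
  obtain rb := ℛ k b
  have rb1 : ∀ i : rb.ι, Coalgebra.Repr k (rb.left i) (A × A) := fun i => ℛ k (rb.left i)
  have rb2 : ∀ i : rb.ι, Coalgebra.Repr k (rb.right i) (A × A) := fun i => ℛ k (rb.right i)
  have expand : Gmap k A ((Dder k A) b) = ∑ i ∈ rb.index, ∑ j ∈ (rb2 i).index,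
      (rb.left i * antipode (R := k) ((rb2 i).left j)) •
        KaehlerDifferential.D k A ((rb2 i).right j) := by
    show Gmap k A (dD k A b) = _
    rw [dD_repr k A rb, map_sum]
    refine Finset.sum_congr rfl fun i _ => ?_
    rw [Gmap_tmul, gmap_pp, hmap_repr k A (rb2 i), Finset.smul_sum]
    exact Finset.sum_congr rfl fun j _ => by rw [smul_smul]
  rw [expand]
  have key := congrArg (Tmap k A) (sum_tmul_tmul_eq rb rb1 rb2)
  simp only [map_sum, Tmap_tmul] at key
  rw [← key]
  have step : ∀ i ∈ rb.index, (∑ j ∈ (rb1 i).index,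
      ((rb1 i).left j * antipode (R := k) ((rb1 i).right j)) •
        KaehlerDifferential.D k A (rb.right i))
      = counit (R := k) (rb.left i) • KaehlerDifferential.D k A (rb.right i) := by
    intro i _
    rw [← Finset.sum_smul, sum_mul_antipode_eq_algebraMap_counit (rb1 i), algebraMap_smul]
  rw [Finset.sum_congr rfl step]
  simp_rw [← Derivation.map_smul]
  rw [← map_sum, sum_counit_smul_right rb]

lemma Fmap_Gmap : (Fmap k A) ∘ₗ (Gmap k A) = LinearMap.id := by
  classical
  apply LinearMap.ext
  intro z
  induction z using TensorProduct.induction_on with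
  | zero => simp
  | add x y hx hy => rw [map_add, hx, hy, map_add]
  | tmul x q =>
    obtain ⟨⟨y, hy⟩, rfl⟩ := Submodule.Quotient.mk_surjective _ q
    rw [LinearMap.comp_apply, LinearMap.id_apply, Gmap_tmul, gmap_mk, map_smul]
    have main : Fmap k A (hmap k A y) = (1 : A) ⊗ₜ[k] (Submodule.Quotient.mk ⟨y, hy⟩ : QQ k A) := by
      obtain ry := ℛ k y
      have ry1 : ∀ i : ry.ι, Coalgebra.Repr k (ry.left i) (A × A) := fun i => ℛ k (ry.left i)
      have ry2 : ∀ i : ry.ι, Coalgebra.Repr k (ry.right i) (A × A) := fun i => ℛ k (ry.right i)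
      have expand : Fmap k A (hmap k A y) = ∑ i ∈ ry.index, ∑ j ∈ (ry2 i).index,
          (antipode (R := k) (ry.left i) * (ry2 i).left j) ⊗ₜ[k] pp k A ((ry2 i).right j) := by
        rw [hmap_repr k A ry, map_sum]
        refine Finset.sum_congr rfl fun i _ => ?_
        rw [map_smul]
        rw [show Fmap k A (KaehlerDifferential.D k A (ry.right i)) = dD k A (ry.right i) from
          Derivation.liftKaehlerDifferential_comp_D _ _]
        rw [dD_repr k A (ry2 i), Finset.smul_sum]
        exact Finset.sum_congr rfl fun j _ => by rw [smul_tmul', smul_eq_mul]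
      rw [expand]
      have key := congrArg (T2map k A) (sum_tmul_tmul_eq ry ry1 ry2)
      simp only [map_sum, T2map_tmul] at key
      rw [← key]
      have step : ∀ i ∈ ry.index, (∑ j ∈ (ry1 i).index,
          (antipode (R := k) ((ry1 i).left j) * (ry1 i).right j) ⊗ₜ[k] pp k A (ry.right i))
          = (1 : A) ⊗ₜ[k] (counit (R := k) (ry.left i) • pp k A (ry.right i)) := by
        intro i _
        rw [← sum_tmul, sum_antipode_mul_eq_algebraMap_counit (ry1 i), Algebra.algebraMap_eq_smul_one, smul_tmul]
      rw [Finset.sum_congr rfl step]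
      simp_rw [← tmul_sum]
      have hsum : (∑ i ∈ ry.index, counit (R := k) (ry.left i) • pp k A (ry.right i))
          = pp k A y := by
        simp_rw [← map_smul]
        rw [← map_sum, sum_counit_smul_right ry]
      rw [hsum, pp_of_mem k A hy]
    rw [main, smul_tmul', smul_eq_mul, mul_one]

noncomputable def equivKaehler : Ω[A⁄k] ≃ₗ[A] A ⊗[k] QQ k A :=
  LinearEquiv.ofLinear (Fmap k A) (Gmap k A) (Fmap_Gmap k A) (Gmap_Fmap k A)

end Equiv

end HopfKaehlerAux

open TensorProduct

/-- For a finitely generated commutative Hopf algebra `A` over a field `k`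
of characteristic zero, with augmentation ideal `𝔞 = ker ε`, the module of Kähler
differentials `Ω_{A/k}` is isomorphic as an `A`-module to `A ⊗_k (𝔞/𝔞²)`; in particular it
is a free `A`-module whose rank equals `dim_k (𝔞/𝔞²)`. -/
theorem kaehlerDifferential_iso_tensor_cotangent
    (k A : Type*) [Field k] [CharZero k] [CommRing A] [HopfAlgebra k A]
    [Algebra.FiniteType k A] :
    letI I : Ideal A := RingHom.ker (Bialgebra.counitAlgHom k A)
    letI 𝔞 : Submodule k A := Submodule.restrictScalars k I
    letI Q := 𝔞 ⧸ (Submodule.comap 𝔞.subtype (Submodule.restrictScalars k (I * I)))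
    Nonempty ((Ω[A⁄k]) ≃ₗ[A] A ⊗[k] Q) ∧
      Module.Free A (Ω[A⁄k]) ∧ Module.rank A (Ω[A⁄k]) = Module.rank k Q := by
  haveI : Nontrivial A := ⟨⟨0, 1, fun h => zero_ne_one (α := k) (by
    have h2 := congrArg (Coalgebra.counit (R := k)) h
    rwa [map_zero, Bialgebra.counit_one] at h2)⟩⟩
  refine ⟨⟨HopfKaehlerAux.equivKaehler k A⟩,
    Module.Free.of_equiv (HopfKaehlerAux.equivKaehler k A).symm, ?_⟩
  rw [LinearEquiv.rank_eq (HopfKaehlerAux.equivKaehler k A), Module.rank_baseChange,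
    Cardinal.lift_id]
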